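/- Let P = {x ∈ ℝⁿ : Ax = b, Bx ≤ d} be a pointed polyhedron, let g ∈ ker(A) be a nonzero vector whose components are integers with greatest common divisor 1, and let B′ denote the maximal row-submatrix of B such that B′g = 0. Then g is a circuit of P if and only if the rank of the stacked matrix (A; B′) equals n − 1. -/

import Mathlib

/-!
STATEMENT 4: For a pointed polyhedron P = {x : A x = b, B x ≤ d} and a nonzero g ∈ ker A with
coprime integer components, g is a circuit of P iff rank (A; B') = n - 1, where B' is the
maximal row-submatrix of B with B' g = 0.
-/

open Matrix

/-- The polyhedron `{x ∈ ℝⁿ : A x = b, B x ≤ d}`. -/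
def PolyAB {mA mB n : ℕ} (A : Matrix (Fin mA) (Fin n) ℝ) (b : Fin mA → ℝ)
    (B : Matrix (Fin mB) (Fin n) ℝ) (d : Fin mB → ℝ) : Set (Fin n → ℝ) :=
  {x | A.mulVec x = b ∧ ∀ i, B.mulVec x i ≤ d i}

/-- A real vector with integer components whose greatest common divisor is 1. -/
def IsCoprimeIntegerVec {n : ℕ} (g : Fin n → ℝ) : Prop :=
  ∃ gz : Fin n → ℤ, (∀ i, g i = (gz i : ℝ)) ∧ Finset.univ.gcd gz = 1

/-- `g` is a circuit of the system `A x = b`, `B x ≤ d`:  `g ∈ ker A \ {0}` with coprime integer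
components such that `B g` is support-minimal over `{B x : x ∈ ker A \ {0}}`. -/
def IsCircuit {mA mB n : ℕ} (A : Matrix (Fin mA) (Fin n) ℝ)
    (B : Matrix (Fin mB) (Fin n) ℝ) (g : Fin n → ℝ) : Prop :=
  A.mulVec g = 0 ∧ g ≠ 0 ∧ IsCoprimeIntegerVec g ∧
    ¬ ∃ y : Fin n → ℝ, A.mulVec y = 0 ∧ y ≠ 0 ∧
      {i | B.mulVec y i ≠ 0} ⊂ {i | B.mulVec g i ≠ 0}

/-- A circuit walk: a sequence of points of `P` starting and ending at vertices,
each step a maximal step along a circuit direction. -/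
def IsCircuitWalk {n : ℕ} (P : Set (Fin n → ℝ)) (Circ : (Fin n → ℝ) → Prop)
    {k : ℕ} (y : Fin (k + 1) → Fin n → ℝ) : Prop :=
  y 0 ∈ P.extremePoints ℝ ∧ y (Fin.last k) ∈ P.extremePoints ℝ ∧
  ∀ i : Fin k, y i.castSucc ∈ P ∧
    ∃ (g : Fin n → ℝ) (α : ℝ), Circ g ∧ 0 < α ∧
      y i.succ = y i.castSucc + α • g ∧
      ∀ β : ℝ, α < β → y i.castSucc + β • g ∉ P


open scoped Classical in
theorem isCircuit_iff_rank_eq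
    {mA mB n : ℕ} (A : Matrix (Fin mA) (Fin n) ℝ) (b : Fin mA → ℝ)
    (B : Matrix (Fin mB) (Fin n) ℝ) (d : Fin mB → ℝ)
    (hpointed : ((PolyAB A b B d).extremePoints ℝ).Nonempty)
    (g : Fin n → ℝ) (hker : A.mulVec g = 0) (hg : g ≠ 0)
    (hcop : IsCoprimeIntegerVec g) :
    IsCircuit A B g ↔
      (Matrix.fromRows A
        (B.submatrix (fun i : {i : Fin mB // B.mulVec g i = 0} => (i : Fin mB)) id)).rank
        = n - 1 := by

  classical
  -- Pointedness gives triviality of the combined kernel.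
  have hker0 : ∀ z : Fin n → ℝ, A.mulVec z = 0 → B.mulVec z = 0 → z = 0 := by
    intro z hAz hBz
    obtain ⟨x, hx⟩ := hpointed
    rw [mem_extremePoints] at hx
    obtain ⟨⟨hxA, hxB⟩, hx2⟩ := hx
    have h1 : (x - z) ∈ PolyAB A b B d := by
      constructor
      · rw [Matrix.mulVec_sub, hAz, hxA]; simp
      · intro i
        rw [Matrix.mulVec_sub, hBz]
        simpa using hxB i
    have h2 : (x + z) ∈ PolyAB A b B d := by
      constructor
      · rw [Matrix.mulVec_add, hAz, hxA]; simp
      · intro i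
        rw [Matrix.mulVec_add, hBz]
        simpa using hxB i
    have hseg : x ∈ openSegment ℝ (x - z) (x + z) := by
      refine ⟨1/2, 1/2, by norm_num, by norm_num, by norm_num, ?_⟩
      funext i
      simp only [Pi.add_apply, Pi.smul_apply, Pi.sub_apply, smul_eq_mul]
      ring
    have hxz := (hx2 _ h1 _ h2 hseg).1
    have : x - z = x := hxz
    have := sub_eq_self.mp this
    exact this
  set L := (Matrix.fromRows A
      (B.submatrix (fun i : {i : Fin mB // B.mulVec g i = 0} => (i : Fin mB)) id)).mulVecLin
    with hL
  have hMker : ∀ z : Fin n → ℝ, z ∈ LinearMap.ker L ↔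
      (A.mulVec z = 0 ∧ ∀ i, B.mulVec g i = 0 → B.mulVec z i = 0) := by
    intro z
    rw [LinearMap.mem_ker, hL, Matrix.mulVecLin_apply, Matrix.fromRows_mulVec]
    constructor
    · intro h
      refine ⟨funext fun i => congrFun h (Sum.inl i), fun i hi => ?_⟩
      exact congrFun h (Sum.inr ⟨i, hi⟩)
    · rintro ⟨h1, h2⟩
      funext i
      cases i with
      | inl i => exact congrFun h1 i
      | inr i => exact h2 i.1 i.2
  have hgker : g ∈ LinearMap.ker L := (hMker g).2 ⟨hker, fun i hi => hi⟩
  have hrn := LinearMap.finrank_range_add_finrank_ker L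
  have hfr : Module.finrank ℝ (Fin n → ℝ) = n := by
    simp [Module.finrank_pi]
  rw [hfr] at hrn
  have hrankdef : (Matrix.fromRows A
      (B.submatrix (fun i : {i : Fin mB // B.mulVec g i = 0} => (i : Fin mB)) id)).rank
      = Module.finrank ℝ (LinearMap.range L) := rfl
  have hn : 1 ≤ n := by
    rcases Nat.eq_zero_or_pos n with h | h
    · exfalso; apply hg; subst h; funext i; exact absurd i.2 (by omega)
    · exact h
  constructor
  · rintro ⟨-, -, -, hmin⟩
    have hBgne : B.mulVec g ≠ 0 := fun h => hg (hker0 g hker h)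
    obtain ⟨j, hj⟩ : ∃ j, B.mulVec g j ≠ 0 := by
      by_contra h
      push_neg at h
      exact hBgne (funext h)
    have hkereq : LinearMap.ker L = Submodule.span ℝ {g} := by
      apply le_antisymm
      · intro y hy
        rw [hMker] at hy
        obtain ⟨hAy, hBy⟩ := hy
        set c := B.mulVec y j / B.mulVec g j with hc
        have h0 : y - c • g = 0 := by
          by_contra hne
          apply hmin
          refine ⟨y - c • g, ?_, hne, ?_⟩
          · rw [Matrix.mulVec_sub, Matrix.mulVec_smul, hAy, hker]; simp
          · rw [Set.ssubset_iff_subset_ne]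
            constructor
            · intro i hi
              simp only [Set.mem_setOf_eq, Matrix.mulVec_sub, Matrix.mulVec_smul] at hi ⊢
              intro hgi
              apply hi
              simp [hBy i hgi, hgi]
            · intro hsup
              have hjmem : j ∈ {i | B.mulVec g i ≠ 0} := hj
              rw [← hsup] at hjmem
              apply hjmem
              simp only [Set.mem_setOf_eq, Matrix.mulVec_sub, Matrix.mulVec_smul, Pi.sub_apply,
                Pi.smul_apply, smul_eq_mul, hc]
              field_simp; ring
        have hyc : y = c • g := by
          have := sub_eq_zero.mp h0
          exact this
        exact Submodule.mem_span_singleton.2 ⟨c, hyc.symm⟩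
      · rw [Submodule.span_singleton_le_iff_mem]; exact hgker
    have h1 : Module.finrank ℝ (LinearMap.ker L) = 1 := by
      rw [hkereq]; exact finrank_span_singleton hg
    rw [hrankdef]
    omega
  · intro hrank
    rw [hrankdef] at hrank
    have h1 : Module.finrank ℝ (LinearMap.ker L) = 1 := by omega
    have hle : Submodule.span ℝ {g} ≤ LinearMap.ker L := by
      rw [Submodule.span_singleton_le_iff_mem]; exact hgker
    have heq : Submodule.span ℝ {g} = LinearMap.ker L :=
      Submodule.eq_of_le_of_finrank_le hle (by rw [h1, finrank_span_singleton hg])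
    refine ⟨hker, hg, hcop, ?_⟩
    rintro ⟨y, hAy, hy0, hss⟩
    rw [Set.ssubset_iff_subset_ne] at hss
    have hyker : y ∈ LinearMap.ker L := by
      rw [hMker]
      refine ⟨hAy, fun i hi => ?_⟩
      by_contra h
      exact (hss.1 h) hi
    obtain ⟨c, hc⟩ := Submodule.mem_span_singleton.1 (heq ▸ hyker)
    have hc0 : c ≠ 0 := fun h => hy0 (by rw [← hc, h, zero_smul])
    apply hss.2
    ext i
    simp only [Set.mem_setOf_eq, ← hc, Matrix.mulVec_smul, Pi.smul_apply, smul_eq_mul]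
    constructor
    · intro hi
      exact fun h => hi (by rw [h, mul_zero])
    · intro hi
      exact mul_ne_zero hc0 hi
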